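/- Let P (resp. P') be the simplex of the Gorenstein weighted projective space ℙ(λ₀,…,λₙ) (resp. of a Gorenstein fake weighted projective space with the same weights), both reflexive. Assume: (a) vol-based formula mult Q = n!·vol(Q)/h for any simplex Q with these weights (h = Σλᵢ), and (b) the dual P'^∨ is again a fake weighted projective simplex with the same weights, with P'^∨ = (Hᵀ)⁻¹P^∨ for H ∈ Herm(n, mult P'). Then mult P' divides mult P^∨. -/

import Mathlib

open MeasureTheory

/-- The real vector associated to an integer vector. -/
def coeVec {n : ℕ} (v : Fin n → ℤ) : Fin n → ℝ := fun j => (v j : ℝ)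

/-- The dual polytope Q^∨ = { u : ⟨u,v⟩ ≥ −1 for all v ∈ Q }. -/
def dualPolytope {n : ℕ} (Q : Set (Fin n → ℝ)) : Set (Fin n → ℝ) :=
  {u | ∀ v ∈ Q, -1 ≤ ∑ i, u i * v i}

/-- A lattice polytope: the convex hull of finitely many lattice points. -/
def IsLatticePolytope {n : ℕ} (Q : Set (Fin n → ℝ)) : Prop :=
  ∃ S : Finset (Fin n → ℤ), Q = convexHull ℝ (coeVec '' (S : Set (Fin n → ℤ)))

/-- A reflexive polytope. -/
def IsReflexive {n : ℕ} (Q : Set (Fin n → ℝ)) : Prop :=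
  IsLatticePolytope Q ∧ (0 : Fin n → ℝ) ∈ interior Q ∧ IsLatticePolytope (dualPolytope Q)

/-- The multiplicity of a lattice simplex with vertices ρ₀,…,ρₙ. -/
noncomputable def multOf {n : ℕ} (ρ : Fin (n + 1) → Fin n → ℤ) : ℕ :=
  Nat.card ((Fin n → ℤ) ⧸ Submodule.span ℤ (Set.range ρ))

/-- Herm(n,k): lower-triangular nonnegative integer matrices of determinant k with
off-diagonal entries h_{ij} ∈ {0,…,h_{jj}−1} for i > j. -/
def Herm (n : ℕ) (k : ℕ) : Set (Matrix (Fin n) (Fin n) ℤ) :=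
  {H | (∀ i j : Fin n, i < j → H i j = 0) ∧ (∀ i j : Fin n, 0 ≤ H i j) ∧
    (∀ i j : Fin n, j < i → H i j < H j j) ∧ H.det = (k : ℤ)}

/-- **mult P' divides mult P^∨ for Gorenstein fake weighted projective spaces.**
Let P be the reflexive simplex of the Gorenstein weighted projective space
ℙ(λ₀,…,λₙ) (vertices ρ generate ℤⁿ with Σλᵢρᵢ = 0), and P' the reflexive simplex of a
Gorenstein fake weighted projective space with the same weights (vertices ρ',
Σλᵢρ'ᵢ = 0). Let ρd, ρ'd be the vertices of the dual simplices P^∨, P'^∨. Assume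
(a) vol(Q) = (h/n!)·mult Q for Q ∈ {P', P^∨, P'^∨}, and (b) P'^∨ = (Hᵀ)⁻¹·P^∨ for some
H ∈ Herm(n, mult P'). Then mult P' divides mult P^∨. -/
theorem mult_divides_dual_mult (n : ℕ) (lam : Fin (n + 1) → ℤ)
    (hpos : ∀ i, 0 < lam i) (hgcd : Finset.univ.gcd lam = 1)
    (ρ ρ' ρd ρ'd : Fin (n + 1) → Fin n → ℤ)
    (hgen : Submodule.span ℤ (Set.range ρ) = ⊤)
    (hrel : ∑ i, lam i • ρ i = 0) (hrel' : ∑ i, lam i • ρ' i = 0)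
    (haff' : AffineIndependent ℝ (fun i => coeVec (ρ' i)))
    (hreflP : IsReflexive (convexHull ℝ (Set.range fun i => coeVec (ρ i))))
    (hreflP' : IsReflexive (convexHull ℝ (Set.range fun i => coeVec (ρ' i))))
    (hd : convexHull ℝ (Set.range fun i => coeVec (ρd i)) =
      dualPolytope (convexHull ℝ (Set.range fun i => coeVec (ρ i))))
    (hd' : convexHull ℝ (Set.range fun i => coeVec (ρ'd i)) =
      dualPolytope (convexHull ℝ (Set.range fun i => coeVec (ρ' i))))
    (ha : ∀ τ : Fin (n + 1) → Fin n → ℤ, (τ = ρ' ∨ τ = ρd ∨ τ = ρ'd) →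
      volume (convexHull ℝ (Set.range fun i => coeVec (τ i))) =
        ENNReal.ofReal ((∑ i, (lam i : ℝ)) * (multOf τ : ℝ) / (n.factorial : ℝ)))
    (H : Matrix (Fin n) (Fin n) ℤ) (hH : H ∈ Herm n (multOf ρ'))
    (hb : dualPolytope (convexHull ℝ (Set.range fun i => coeVec (ρ' i))) =
      (fun v => ((H.map ((↑) : ℤ → ℝ)).transpose)⁻¹.mulVec v) ''
        dualPolytope (convexHull ℝ (Set.range fun i => coeVec (ρ i)))) :
    multOf ρ' ∣ multOf ρd := by

  obtain ⟨hlow, hnn, hoff, hdet⟩ := hH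
  set c := multOf ρ' with hc
  -- positivity of h = ∑ λᵢ
  have hrpos : (0:ℝ) < ∑ i, (lam i : ℝ) :=
    Finset.sum_pos (fun i _ => by exact_mod_cast hpos i) Finset.univ_nonempty
  have hfacpos : (0:ℝ) < (n.factorial : ℝ) := by exact_mod_cast n.factorial_pos
  -- c > 0, from positivity of the volume of P'
  have hvolP' := ha ρ' (Or.inl rfl)
  have hP'pos : 0 < volume (convexHull ℝ (Set.range fun i => coeVec (ρ' i))) := by
    obtain ⟨-, h0, -⟩ := hreflP'
    have hne : (interior (convexHull ℝ (Set.range fun i => coeVec (ρ' i)))).Nonempty := ⟨0, h0⟩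
    calc (0:ENNReal) < volume (interior (convexHull ℝ (Set.range fun i => coeVec (ρ' i)))) :=
          isOpen_interior.measure_pos _ hne
      _ ≤ _ := measure_mono interior_subset
  have hcpos : 0 < c := by
    rcases Nat.eq_zero_or_pos c with h0 | h
    · rw [hvolP', ← hc, h0] at hP'pos
      simp at hP'pos
    · exact h
  -- the linear map given by (Hᵀ)⁻¹ over ℝ
  set A : Matrix (Fin n) (Fin n) ℝ := ((H.map ((↑) : ℤ → ℝ)).transpose)⁻¹ with hA
  have hdetHR : (H.map ((↑) : ℤ → ℝ)).det = (c : ℝ) := by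
    have h1 := RingHom.map_det (Int.castRingHom ℝ) H
    simp only [RingHom.mapMatrix_apply] at h1
    rw [show ((↑) : ℤ → ℝ) = ⇑(Int.castRingHom ℝ) from rfl, ← h1, hdet]
    simp
  have hdetA : A.det = (c : ℝ)⁻¹ := by
    rw [hA, Matrix.det_nonsing_inv, Matrix.det_transpose, hdetHR, Ring.inverse_eq_inv]
  have himg : (fun v => A.mulVec v) '' dualPolytope (convexHull ℝ (Set.range fun i => coeVec (ρ i)))
      = Matrix.toLin' A '' dualPolytope (convexHull ℝ (Set.range fun i => coeVec (ρ i))) := by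
    congr 1
  have hvol : volume (convexHull ℝ (Set.range fun i => coeVec (ρ'd i)))
      = ENNReal.ofReal |(c:ℝ)⁻¹| *
        volume (convexHull ℝ (Set.range fun i => coeVec (ρd i))) := by
    rw [hd', hb, himg, hd,
      MeasureTheory.Measure.addHaar_image_linearMap, LinearMap.det_toLin', hdetA]
  rw [ha ρ'd (Or.inr (Or.inr rfl)), ha ρd (Or.inr (Or.inl rfl))] at hvol
  have hcR : (0:ℝ) < (c:ℝ) := by exact_mod_cast hcpos
  rw [abs_of_nonneg (by positivity), ← ENNReal.ofReal_mul (by positivity)] at hvol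
  have hreq : (∑ i, (lam i : ℝ)) * (multOf ρ'd : ℝ) / (n.factorial : ℝ)
      = (c:ℝ)⁻¹ * ((∑ i, (lam i : ℝ)) * (multOf ρd : ℝ) / (n.factorial : ℝ)) := by
    rw [ENNReal.ofReal_eq_ofReal_iff (by positivity) (by positivity)] at hvol
    exact hvol
  have key : (multOf ρd : ℝ) = (c : ℝ) * (multOf ρ'd : ℝ) := by
    have hne : ((∑ i, (lam i : ℝ)) * (n.factorial : ℝ)) ≠ 0 := by positivity
    field_simp at hreq
    apply mul_right_cancel₀ hne
    ring_nf
    ring_nf at hreq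
    rw [← hreq]
    ring
  have keyN : multOf ρd = c * multOf ρ'd := by exact_mod_cast key
  exact Dvd.intro _ keyN.symm
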